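/- arXiv:2108.07472 — 2 statements merged into one kernel-verified Lean document; each statement's English description precedes it below -/
import Mathlib

section
/- For every game utility u (with all values u_i(a) in [0,1]) and every pair of mixed strategy profiles σ, σ', the Nash approximation loss is 2-Lipschitz in the strategy profile under the ℓ1-distance: |NashApr(σ, u) − NashApr(σ', u)| ≤ 2‖σ − σ'‖₁. -/
open Finset MeasureTheory

section NashDefs

variable {N : Type*} {A : N → Type*}

/-- `σ` is a mixed strategy profile: each `σ i` is a probability distribution on `A i`. -/
def IsMixedProfile [∀ i, Fintype (A i)] (σ : ∀ i, A i → ℝ) : Prop :=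
  (∀ i a, 0 ≤ σ i a) ∧ ∀ i, ∑ a, σ i a = 1

/-- Expected utility of player `i` when the mixed strategy profile `σ` is played:
`u_i(σ) = ∑_{a ∈ A} (∏_j σ_j(a_j)) u_i(a)`. -/
def expUtil [Fintype N] [DecidableEq N] [∀ i, Fintype (A i)]
    (u : N → (∀ j, A j) → ℝ) (i : N) (σ : ∀ j, A j → ℝ) : ℝ :=
  ∑ a : ∀ j, A j, (∏ j, σ j (a j)) * u i a

/-- The pure strategy of player `i` playing action `b` with probability one. -/
def pureStrat [∀ i, DecidableEq (A i)] {i : N} (b : A i) : A i → ℝ :=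
  fun c => if c = b then 1 else 0

/-- Nash approximation loss:
`NashApr(σ, u) = max_{i ∈ N} max_{b ∈ A_i} [u_i(b, σ_{-i}) - u_i(σ)]`. -/
noncomputable def nashApr [Fintype N] [DecidableEq N] [Nonempty N]
    [∀ i, Fintype (A i)] [∀ i, DecidableEq (A i)] [∀ i, Nonempty (A i)]
    (σ : ∀ i, A i → ℝ) (u : N → (∀ j, A j) → ℝ) : ℝ :=
  Finset.univ.sup' Finset.univ_nonempty fun i : N =>
    Finset.univ.sup' Finset.univ_nonempty fun b : A i =>
      expUtil u i (Function.update σ i (pureStrat b)) - expUtil u i σ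

/-- ℓ1-distance between mixed strategy profiles:
`‖σ - σ'‖₁ = ∑_{i ∈ N} ∑_{a_i ∈ A_i} |σ_i(a_i) - σ'_i(a_i)|`. -/
def dist1 [Fintype N] [∀ i, Fintype (A i)] (σ σ' : ∀ i, A i → ℝ) : ℝ :=
  ∑ i, ∑ a, |σ i a - σ' i a|

/-- ℓmax-distance between game utilities:
`‖u - v‖max = max_{i ∈ N} max_{a ∈ A} |u_i(a) - v_i(a)|`. -/
noncomputable def distMax [Fintype N] [DecidableEq N] [Nonempty N]
    [∀ i, Fintype (A i)] [∀ i, Nonempty (A i)]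
    (u v : N → (∀ j, A j) → ℝ) : ℝ :=
  Finset.univ.sup' Finset.univ_nonempty fun i : N =>
    Finset.univ.sup' Finset.univ_nonempty fun a : ∀ j, A j => |u i a - v i a|

end NashDefs

section Aux
variable {N : Type*} [Fintype N] [DecidableEq N]
  {A : N → Type*} [∀ i, Fintype (A i)]

omit [∀ i, Fintype (A i)] in
lemma prod_update_split (τ : ∀ j, A j → ℝ) (k : N) (r : A k → ℝ) (a : ∀ j, A j) :
    (∏ j, Function.update τ k r j (a j)) = r (a k) * ∏ j ∈ univ.erase k, τ j (a j) := by
  rw [← Finset.mul_prod_erase univ _ (mem_univ k), Function.update_self]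
  congr 1
  exact Finset.prod_congr rfl fun j hj => by
    rw [Function.update_of_ne (Finset.mem_erase.1 hj).1]

lemma expUtil_update_sub (u : N → (∀ j, A j) → ℝ) (i : N)
    (hu : ∀ a, |u i a| ≤ 1)
    (τ : ∀ j, A j → ℝ) (hτ0 : ∀ j a, 0 ≤ τ j a) (hτ1 : ∀ j, ∑ a, τ j a = 1)
    (k : N) (p q : A k → ℝ) :
    |expUtil u i (Function.update τ k p) - expUtil u i (Function.update τ k q)|
      ≤ ∑ a, |p a - q a| := by
  have hdiff : expUtil u i (Function.update τ k p) - expUtil u i (Function.update τ k q)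
      = ∑ a : ∀ j, A j, ((p (a k) - q (a k)) * ∏ j ∈ univ.erase k, τ j (a j)) * u i a := by
    rw [expUtil, expUtil, ← Finset.sum_sub_distrib]
    refine Finset.sum_congr rfl fun a _ => ?_
    rw [prod_update_split, prod_update_split]; ring
  rw [hdiff]
  have hstep : |∑ a : ∀ j, A j, ((p (a k) - q (a k)) * ∏ j ∈ univ.erase k, τ j (a j)) * u i a|
      ≤ ∑ a : ∀ j, A j, |p (a k) - q (a k)| * ∏ j ∈ univ.erase k, τ j (a j) := by
    refine (Finset.abs_sum_le_sum_abs _ _).trans (Finset.sum_le_sum fun a _ => ?_)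
    rw [abs_mul, abs_mul, abs_of_nonneg (Finset.prod_nonneg fun j _ => hτ0 j (a j))]
    calc |p (a k) - q (a k)| * (∏ j ∈ univ.erase k, τ j (a j)) * |u i a|
        ≤ |p (a k) - q (a k)| * (∏ j ∈ univ.erase k, τ j (a j)) * 1 := by
          apply mul_le_mul_of_nonneg_left (hu a)
          exact mul_nonneg (abs_nonneg _) (Finset.prod_nonneg fun j _ => hτ0 j (a j))
      _ = _ := mul_one _
  refine hstep.trans (le_of_eq ?_)
  have hkey : ∑ a : ∀ j, A j, |p (a k) - q (a k)| * ∏ j ∈ univ.erase k, τ j (a j)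
      = ∑ a : ∀ j, A j, ∏ j, Function.update τ k (fun x => |p x - q x|) j (a j) := by
    refine Finset.sum_congr rfl fun a _ => ?_
    rw [prod_update_split]
  rw [hkey, ← Fintype.prod_sum]
  rw [← Finset.mul_prod_erase univ _ (mem_univ k)]
  have h1 : ∑ x, Function.update τ k (fun x => |p x - q x|) k x = ∑ x, |p x - q x| := by
    rw [Function.update_self]
  rw [h1]
  have h2 : ∏ j ∈ univ.erase k, (∑ x, Function.update τ k (fun x => |p x - q x|) j x) = 1 := by
    refine Finset.prod_eq_one fun j hj => ?_
    rw [Function.update_of_ne (Finset.mem_erase.1 hj).1, hτ1 j]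
  rw [h2, mul_one]

lemma expUtil_dist1 (u : N → (∀ j, A j) → ℝ) (i : N)
    (hu : ∀ a, |u i a| ≤ 1)
    (τ τ' : ∀ j, A j → ℝ) (hτ : IsMixedProfile τ) (hτ' : IsMixedProfile τ') :
    |expUtil u i τ - expUtil u i τ'| ≤ dist1 τ τ' := by
  classical
  have main : ∀ s : Finset N,
      |expUtil u i (fun j => if j ∈ s then τ' j else τ j) - expUtil u i τ|
        ≤ ∑ j ∈ s, ∑ a, |τ j a - τ' j a| := by
    intro s
    induction s using Finset.induction with
    | empty => simp
    | @insert k s hk ih =>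
      set hyb : ∀ j, A j → ℝ := fun j => if j ∈ s then τ' j else τ j with hhyb
      have hyb0 : ∀ j a, 0 ≤ hyb j a := fun j a => by
        by_cases h : j ∈ s <;> simp [hhyb, h, hτ.1 j a, hτ'.1 j a]
      have hyb1 : ∀ j, ∑ a, hyb j a = 1 := fun j => by
        by_cases h : j ∈ s <;> simp [hhyb, h, hτ.2 j, hτ'.2 j]
      have e1 : (fun j => if j ∈ insert k s then τ' j else τ j)
          = Function.update hyb k (τ' k) := by
        funext j
        by_cases h : j = k
        · subst h; simp [Function.update_self]
        · simp [Function.update_of_ne h, hhyb, h]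
      have e2 : hyb = Function.update hyb k (τ k) := by
        funext j
        by_cases h : j = k
        · subst h; simp [hhyb, hk, Function.update_self]
        · simp [Function.update_of_ne h]
      calc |expUtil u i (fun j => if j ∈ insert k s then τ' j else τ j) - expUtil u i τ|
          ≤ |expUtil u i (fun j => if j ∈ insert k s then τ' j else τ j) - expUtil u i hyb|
            + |expUtil u i hyb - expUtil u i τ| := abs_sub_le _ _ _
        _ ≤ (∑ a, |τ' k a - τ k a|) + ∑ j ∈ s, ∑ a, |τ j a - τ' j a| := by
            refine add_le_add ?_ ih
            rw [e1]; nth_rewrite 2 [e2]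
            exact expUtil_update_sub u i hu hyb hyb0 hyb1 k (τ' k) (τ k)
        _ = ∑ j ∈ insert k s, ∑ a, |τ j a - τ' j a| := by
            rw [Finset.sum_insert hk]
            congr 1
            exact Finset.sum_congr rfl fun a _ => abs_sub_comm _ _
  have := main Finset.univ
  simp only [Finset.mem_univ, if_true] at this
  calc |expUtil u i τ - expUtil u i τ'| = |expUtil u i τ' - expUtil u i τ| :=
        abs_sub_comm _ _
    _ ≤ dist1 τ τ' := this

variable [∀ i, DecidableEq (A i)]

lemma update_pure_mixed {σ : ∀ i, A i → ℝ} (hσ : IsMixedProfile σ) (i : N) (b : A i) :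
    IsMixedProfile (Function.update σ i (pureStrat b)) := by
  constructor
  · intro j a
    by_cases h : j = i
    · subst h
      rw [Function.update_self]
      unfold pureStrat
      split <;> norm_num
    · rw [Function.update_of_ne h]; exact hσ.1 j a
  · intro j
    by_cases h : j = i
    · subst h
      rw [Function.update_self]
      simp [pureStrat]
    · rw [Function.update_of_ne h]; exact hσ.2 j

lemma dist1_update_pure (σ σ' : ∀ i, A i → ℝ) (hσ : IsMixedProfile σ)
    (hσ' : IsMixedProfile σ') (i : N) (b : A i) :
    dist1 (Function.update σ i (pureStrat b)) (Function.update σ' i (pureStrat b))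
      ≤ dist1 σ σ' := by
  unfold dist1
  refine Finset.sum_le_sum fun j _ => ?_
  by_cases h : j = i
  · subst h
    rw [Function.update_self, Function.update_self]
    simp only [sub_self, abs_zero, Finset.sum_const_zero]
    exact Finset.sum_nonneg fun a _ => abs_nonneg _
  · rw [Function.update_of_ne h, Function.update_of_ne h]

lemma nashApr_le_aux {u : N → (∀ j, A j) → ℝ} (hu : ∀ i a, u i a ∈ Set.Icc (0 : ℝ) 1)
    [Nonempty N] [∀ i, Nonempty (A i)]
    (σ σ' : ∀ i, A i → ℝ) (hσ : IsMixedProfile σ) (hσ' : IsMixedProfile σ') :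
    nashApr σ u - nashApr σ' u ≤ 2 * dist1 σ σ' := by
  have hu' : ∀ i a, |u i a| ≤ 1 := fun i a =>
    abs_le.2 ⟨by linarith [(hu i a).1], (hu i a).2⟩
  rw [sub_le_iff_le_add, add_comm]
  unfold nashApr
  refine Finset.sup'_le _ _ fun i _ => Finset.sup'_le _ _ fun b _ => ?_
  have h1 : |expUtil u i (Function.update σ i (pureStrat b))
      - expUtil u i (Function.update σ' i (pureStrat b))| ≤ dist1 σ σ' :=
    le_trans
      (expUtil_dist1 u i (hu' i) _ _ (update_pure_mixed hσ i b) (update_pure_mixed hσ' i b))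
      (dist1_update_pure σ σ' hσ hσ' i b)
  have h2 : |expUtil u i σ - expUtil u i σ'| ≤ dist1 σ σ' :=
    expUtil_dist1 u i (hu' i) σ σ' hσ hσ'
  have hle : expUtil u i (Function.update σ i (pureStrat b)) - expUtil u i σ
      ≤ (expUtil u i (Function.update σ' i (pureStrat b)) - expUtil u i σ')
        + 2 * dist1 σ σ' := by
    have := abs_le.1 h1
    have := abs_le.1 h2
    cases abs_le.1 h1; cases abs_le.1 h2; linarith
  refine hle.trans (add_le_add_left ?_ _)
  exact le_trans
    (Finset.le_sup' (fun b : A i =>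
      expUtil u i (Function.update σ' i (pureStrat b)) - expUtil u i σ') (mem_univ b))
    (Finset.le_sup'
      (fun i : N => Finset.univ.sup' Finset.univ_nonempty fun b : A i =>
        expUtil u i (Function.update σ' i (pureStrat b)) - expUtil u i σ') (mem_univ i))

end Aux

theorem nashApr_lipschitz_in_strategy
    {N : Type*} [Fintype N] [DecidableEq N] [Nonempty N]
    {A : N → Type*} [∀ i, Fintype (A i)] [∀ i, DecidableEq (A i)] [∀ i, Nonempty (A i)]
    (u : N → (∀ j, A j) → ℝ) (hu : ∀ i a, u i a ∈ Set.Icc (0 : ℝ) 1)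
    (σ σ' : ∀ i, A i → ℝ) (hσ : IsMixedProfile σ) (hσ' : IsMixedProfile σ') :
    |nashApr σ u - nashApr σ' u| ≤ 2 * dist1 σ σ' := by
  have hsymm : dist1 σ' σ = dist1 σ σ' := by
    unfold dist1
    exact Finset.sum_congr rfl fun i _ =>
      Finset.sum_congr rfl fun a _ => abs_sub_comm _ _
  rw [abs_sub_le_iff]
  exact ⟨nashApr_le_aux hu σ σ' hσ hσ',
    hsymm ▸ nashApr_le_aux hu σ' σ hσ' hσ⟩
end

section
/- Let H be a nonempty set of NE approximators, let S = (u^{(1)},…,u^{(m)}) ∈ U^m be a fixed sample of m ≥ 1 game utilities, let r > 0, and suppose C is a nonempty finite set of NE approximators of cardinality K that r-covers H. Then the empirical Rademacher complexity of the Nash approximation loss class satisfies R_S(NashApr ∘ H) ≤ √(2·ln K / m) + 2r, where R_S(NashApr ∘ H) = (1/m)·E_{x}[ sup_{h∈H} Σ_{j=1}^m x_j · NashApr(h(u^{(j)}), u^{(j)}) ] and x = (x_1,…,x_m) is drawn uniformly from {−1,+1}^m. -/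
open Finset MeasureTheory

/-- The set of all game utilities (with values in `[0,1]`) for fixed players `N`
and action space `A`, as a subtype. -/
abbrev GameUtil (N : Type*) (A : N → Type*) : Type _ :=
  {u : N → (∀ j, A j) → ℝ // ∀ i a, u i a ∈ Set.Icc (0 : ℝ) 1}

/-- An NE approximator maps game utilities to mixed strategy profiles. -/
abbrev NEApprox (N : Type*) (A : N → Type*) [∀ i, Fintype (A i)] : Type _ :=
  {h : GameUtil N A → ∀ i, A i → ℝ // ∀ u, IsMixedProfile (h u)}

section Risk

variable {N : Type*} {A : N → Type*} [Fintype N] [DecidableEq N] [Nonempty N]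
  [∀ i, Fintype (A i)] [∀ i, DecidableEq (A i)] [∀ i, Nonempty (A i)]

/-- Nash approximation loss of an NE approximator on a game. -/
noncomputable def nashLoss (h : NEApprox N A) (u : GameUtil N A) : ℝ :=
  nashApr (h.1 u) u.1

/-- True risk `L_D(h) = E_{u ∼ D}[NashApr(h(u), u)]`. -/
noncomputable def trueRisk (D : Measure (GameUtil N A)) (h : NEApprox N A) : ℝ :=
  ∫ u, nashLoss h u ∂D

/-- Empirical risk `L_S(h) = (1/m) ∑_j NashApr(h(u⁽ʲ⁾), u⁽ʲ⁾)`. -/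
noncomputable def empRisk {m : ℕ} (S : Fin m → GameUtil N A) (h : NEApprox N A) : ℝ :=
  (1 / (m : ℝ)) * ∑ j, nashLoss h (S j)

/-- `C` `r`-covers `H` under the `ℓ_{∞,1}`-distance:
every `h ∈ H` is within `ℓ_{∞,1}`-distance `r` of some `g ∈ C`. -/
def Covers (r : ℝ) (C : Finset (NEApprox N A)) (H : Set (NEApprox N A)) : Prop :=
  ∀ h ∈ H, ∃ g ∈ C, ∀ u, dist1 (h.1 u) (g.1 u) ≤ r

end Risk

/-- Empirical Rademacher complexity of the class `{u ↦ NashApr(h(u), u) : h ∈ H}`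
on the sample `S`, with the Rademacher vector drawn uniformly from `{-1,+1}^m`. -/
noncomputable def radComplexity
    {N : Type*} [Fintype N] [DecidableEq N] [Nonempty N]
    {A : N → Type*} [∀ i, Fintype (A i)] [∀ i, DecidableEq (A i)] [∀ i, Nonempty (A i)]
    {m : ℕ} (H : Set (NEApprox N A)) (S : Fin m → GameUtil N A) : ℝ :=
  (1 / (m : ℝ)) * ((1 / (2 : ℝ) ^ m) * ∑ x : Fin m → Bool,
    sSup ((fun h : NEApprox N A =>
      ∑ j, (if x j then (1 : ℝ) else -1) * nashLoss h (S j)) '' H))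

section Aux
variable {N : Type*} {A : N → Type*} [Fintype N] [DecidableEq N] [Nonempty N]
  [∀ i, Fintype (A i)] [∀ i, DecidableEq (A i)] [∀ i, Nonempty (A i)]

lemma sum_pi_prod (g : ∀ j, A j → ℝ) :
    ∑ a : ∀ j, A j, ∏ j, g j (a j) = ∏ j, ∑ b, g j b :=
  (Fintype.prod_sum g).symm

lemma tv_bound (σ σ' : ∀ j, A j → ℝ) (hσ : IsMixedProfile σ) (hσ' : IsMixedProfile σ') :
    ∑ a : ∀ j, A j, |(∏ j, σ j (a j)) - ∏ j, σ' j (a j)| ≤ dist1 σ σ' := by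
  classical
  set n := Fintype.card N with hn
  set e := Fintype.equivFin N with he
  set τ : ℕ → ∀ j, A j → ℝ := fun k j => if (e j : ℕ) < k then σ j else σ' j with hτ
  have hτ0 : τ 0 = σ' := by funext j; simp [hτ]
  have hτn : τ n = σ := by funext j; simp [hτ, hn, (e j).isLt]
  have hτnn : ∀ k j b, 0 ≤ τ k j b := by
    intro k j b; simp only [hτ]; split
    · exact hσ.1 j b
    · exact hσ'.1 j b
  have hτsum : ∀ k j, ∑ b, τ k j b = 1 := by
    intro k j; simp only [hτ]; split
    · exact hσ.2 j
    · exact hσ'.2 j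
  have tele : ∀ a : ∀ j, A j, (∏ j, σ j (a j)) - (∏ j, σ' j (a j)) =
      ∑ k ∈ Finset.range n, ((∏ j, τ (k+1) j (a j)) - ∏ j, τ k j (a j)) := by
    intro a
    rw [Finset.sum_range_sub (fun k => ∏ j, τ k j (a j)), hτn, hτ0]
  set D : N → ℝ := fun i => ∑ b, |σ i b - σ' i b| with hD
  set B : ℕ → ℝ := fun k => ∑ i, if (e i : ℕ) = k then D i else 0 with hB
  have per_k : ∀ k < n, ∑ a : ∀ j, A j, |(∏ j, τ (k+1) j (a j)) - ∏ j, τ k j (a j)| ≤ B k := by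
    intro k hk
    set i0 : N := e.symm ⟨k, hk⟩ with hi0
    have hei0 : (e i0 : ℕ) = k := by simp [hi0]
    have hup : ∀ j, j ≠ i0 → τ (k+1) j = τ k j := by
      intro j hj
      have : (e j : ℕ) ≠ k := by
        intro hc
        apply hj
        have : e j = ⟨k, hk⟩ := Fin.ext hc
        rw [hi0, ← this, Equiv.symm_apply_apply]
      simp only [hτ]
      have h2 : ((e j : ℕ) < k + 1) ↔ ((e j : ℕ) < k) := by omega
      simp only [h2]
    have hk1 : τ (k+1) i0 = σ i0 := by simp [hτ, hei0]
    have hk0 : τ k i0 = σ' i0 := by simp [hτ, hei0]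
    have key : ∀ a : ∀ j, A j, (∏ j, τ (k+1) j (a j)) - ∏ j, τ k j (a j) =
        (σ i0 (a i0) - σ' i0 (a i0)) * ∏ j ∈ {i0}ᶜ, τ k j (a j) := by
      intro a
      rw [Fintype.prod_eq_mul_prod_compl i0 (fun j => τ (k+1) j (a j)),
          Fintype.prod_eq_mul_prod_compl i0 (fun j => τ k j (a j))]
      have : ∏ j ∈ {i0}ᶜ, τ (k+1) j (a j) = ∏ j ∈ {i0}ᶜ, τ k j (a j) := by
        apply Finset.prod_congr rfl
        intro j hj
        rw [hup j (by simpa using hj)]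
      rw [this, hk1, hk0, sub_mul]
    refine le_of_eq ?_
    calc ∑ a : ∀ j, A j, |(∏ j, τ (k+1) j (a j)) - ∏ j, τ k j (a j)|
        = ∑ a : ∀ j, A j, ∏ j, (Function.update (fun j => τ k j) i0
            (fun b => |σ i0 b - σ' i0 b|)) j (a j) := by
          apply Finset.sum_congr rfl
          intro a _
          rw [key a, abs_mul,
            Fintype.prod_eq_mul_prod_compl i0 (fun j => (Function.update (fun j => τ k j) i0
            (fun b => |σ i0 b - σ' i0 b|)) j (a j))]
          congr 1
          · simp
          · rw [abs_of_nonneg (Finset.prod_nonneg fun j _ => hτnn k j (a j))]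
            apply Finset.prod_congr rfl
            intro j hj
            rw [Function.update_of_ne (by simpa using hj)]
      _ = ∏ j, ∑ b, (Function.update (fun j => τ k j) i0
            (fun b => |σ i0 b - σ' i0 b|)) j b := sum_pi_prod _
      _ = D i0 := by
          rw [Fintype.prod_eq_mul_prod_compl i0]
          have : ∏ j ∈ {i0}ᶜ, ∑ b, (Function.update (fun j => τ k j) i0
              (fun b => |σ i0 b - σ' i0 b|)) j b = 1 := by
            apply Finset.prod_eq_one
            intro j hj
            rw [Function.update_of_ne (by simpa using hj)]
            exact hτsum k j
          rw [this, mul_one]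
          simp [hD]
      _ = B k := by
          have hBk : B k = D i0 := by
            simp only [hB]
            rw [Finset.sum_eq_single i0]
            · simp [hei0]
            · intro i _ hi
              have : (e i : ℕ) ≠ k := by
                intro hc
                apply hi
                have : e i = ⟨k, hk⟩ := Fin.ext hc
                rw [hi0, ← this, Equiv.symm_apply_apply]
              simp [this]
            · simp
          rw [hBk]
  calc ∑ a : ∀ j, A j, |(∏ j, σ j (a j)) - ∏ j, σ' j (a j)|
      ≤ ∑ a : ∀ j, A j, ∑ k ∈ Finset.range n,
          |(∏ j, τ (k+1) j (a j)) - ∏ j, τ k j (a j)| := by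
        apply Finset.sum_le_sum
        intro a _
        rw [tele a]
        exact Finset.abs_sum_le_sum_abs _ _
    _ = ∑ k ∈ Finset.range n, ∑ a : ∀ j, A j,
          |(∏ j, τ (k+1) j (a j)) - ∏ j, τ k j (a j)| := Finset.sum_comm
    _ ≤ ∑ k ∈ Finset.range n, B k := by
        apply Finset.sum_le_sum
        intro k hk
        exact per_k k (Finset.mem_range.mp hk)
    _ = dist1 σ σ' := by
        rw [hB, Finset.sum_comm]
        rw [dist1]
        apply Finset.sum_congr rfl
        intro i _
        rw [Finset.sum_ite_eq (Finset.range n) ((e i : ℕ)) (fun _ => D i),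
          if_pos (by simp [hn, (e i).isLt])]

lemma expUtil_nonneg (u : N → (∀ j, A j) → ℝ) (hu : ∀ i a, u i a ∈ Set.Icc (0:ℝ) 1)
    (i : N) (σ : ∀ j, A j → ℝ) (hσ : IsMixedProfile σ) : 0 ≤ expUtil u i σ :=
  Finset.sum_nonneg fun a _ => mul_nonneg (Finset.prod_nonneg fun j _ => hσ.1 j (a j)) (hu i a).1

lemma expUtil_le_one (u : N → (∀ j, A j) → ℝ) (hu : ∀ i a, u i a ∈ Set.Icc (0:ℝ) 1)
    (i : N) (σ : ∀ j, A j → ℝ) (hσ : IsMixedProfile σ) : expUtil u i σ ≤ 1 := by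
  calc expUtil u i σ ≤ ∑ a : ∀ j, A j, ∏ j, σ j (a j) := by
        apply Finset.sum_le_sum
        intro a _
        nth_rewrite 2 [show (∏ j, σ j (a j)) = (∏ j, σ j (a j)) * 1 by ring]
        exact mul_le_mul_of_nonneg_left (hu i a).2 (Finset.prod_nonneg fun j _ => hσ.1 j (a j))
    _ = 1 := by
        rw [sum_pi_prod]
        exact Finset.prod_eq_one fun j _ => hσ.2 j

lemma expUtil_lip (u : N → (∀ j, A j) → ℝ) (hu : ∀ i a, u i a ∈ Set.Icc (0:ℝ) 1)
    (i : N) (σ σ' : ∀ j, A j → ℝ) (hσ : IsMixedProfile σ) (hσ' : IsMixedProfile σ') :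
    |expUtil u i σ - expUtil u i σ'| ≤ dist1 σ σ' := by
  have h1 : expUtil u i σ - expUtil u i σ' =
      ∑ a : ∀ j, A j, ((∏ j, σ j (a j)) - ∏ j, σ' j (a j)) * u i a := by
    rw [expUtil, expUtil, ← Finset.sum_sub_distrib]
    exact Finset.sum_congr rfl fun a _ => (sub_mul _ _ _).symm
  rw [h1]
  calc |∑ a : ∀ j, A j, ((∏ j, σ j (a j)) - ∏ j, σ' j (a j)) * u i a|
      ≤ ∑ a : ∀ j, A j, |((∏ j, σ j (a j)) - ∏ j, σ' j (a j)) * u i a| :=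
        Finset.abs_sum_le_sum_abs _ _
    _ ≤ ∑ a : ∀ j, A j, |(∏ j, σ j (a j)) - ∏ j, σ' j (a j)| := by
        apply Finset.sum_le_sum
        intro a _
        rw [abs_mul]
        nth_rewrite 2 [show |(∏ j, σ j (a j)) - ∏ j, σ' j (a j)| =
          |(∏ j, σ j (a j)) - ∏ j, σ' j (a j)| * 1 by ring]
        apply mul_le_mul_of_nonneg_left _ (abs_nonneg _)
        rw [abs_le]
        exact ⟨by linarith [(hu i a).1], (hu i a).2⟩
    _ ≤ dist1 σ σ' := tv_bound σ σ' hσ hσ'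

lemma update_mixed {σ : ∀ j, A j → ℝ} (hσ : IsMixedProfile σ) {i : N} (b : A i) :
    IsMixedProfile (Function.update σ i (pureStrat b)) := by
  constructor
  · intro j c
    rcases eq_or_ne j i with rfl | hj
    · rw [Function.update_self]
      unfold pureStrat
      split <;> norm_num
    · rw [Function.update_of_ne hj]
      exact hσ.1 j c
  · intro j
    rcases eq_or_ne j i with rfl | hj
    · rw [Function.update_self]
      unfold pureStrat
      simp
    · rw [Function.update_of_ne hj]
      exact hσ.2 j

lemma dist1_update_le (σ σ' : ∀ j, A j → ℝ) (i : N) (p : A i → ℝ) :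
    dist1 (Function.update σ i p) (Function.update σ' i p) ≤ dist1 σ σ' := by
  unfold dist1
  apply Finset.sum_le_sum
  intro j _
  rcases eq_or_ne j i with rfl | hj
  · simp only [Function.update_self]
    simp
    exact Finset.sum_nonneg fun a _ => abs_nonneg _
  · simp only [Function.update_of_ne hj]
    exact le_refl _

lemma dist1_comm (σ σ' : ∀ j, A j → ℝ) : dist1 σ σ' = dist1 σ' σ := by
  unfold dist1
  exact Finset.sum_congr rfl fun i _ => Finset.sum_congr rfl fun a _ => abs_sub_comm _ _

lemma nashApr_le_add (σ σ' : ∀ j, A j → ℝ) (hσ : IsMixedProfile σ) (hσ' : IsMixedProfile σ')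
    (u : N → (∀ j, A j) → ℝ) (hu : ∀ i a, u i a ∈ Set.Icc (0:ℝ) 1) :
    nashApr σ u ≤ nashApr σ' u + 2 * dist1 σ σ' := by
  unfold nashApr
  apply Finset.sup'_le
  intro i _
  apply Finset.sup'_le
  intro b _
  have t1 : |expUtil u i (Function.update σ i (pureStrat b)) -
      expUtil u i (Function.update σ' i (pureStrat b))| ≤ dist1 σ σ' :=
    le_trans (expUtil_lip u hu i _ _ (update_mixed hσ b) (update_mixed hσ' b))
      (dist1_update_le σ σ' i (pureStrat b))
  have t2 : |expUtil u i σ - expUtil u i σ'| ≤ dist1 σ σ' := expUtil_lip u hu i σ σ' hσ hσ'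
  have t3 : expUtil u i (Function.update σ' i (pureStrat b)) - expUtil u i σ' ≤
      (Finset.univ.sup' Finset.univ_nonempty fun i : N =>
        Finset.univ.sup' Finset.univ_nonempty fun b : A i =>
          expUtil u i (Function.update σ' i (pureStrat b)) - expUtil u i σ') := by
    calc expUtil u i (Function.update σ' i (pureStrat b)) - expUtil u i σ'
        ≤ Finset.univ.sup' Finset.univ_nonempty (fun b : A i =>
            expUtil u i (Function.update σ' i (pureStrat b)) - expUtil u i σ') :=
          Finset.le_sup' (fun b : A i =>
            expUtil u i (Function.update σ' i (pureStrat b)) - expUtil u i σ')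
            (Finset.mem_univ b)
      _ ≤ _ := Finset.le_sup' (fun i : N => Finset.univ.sup' Finset.univ_nonempty fun b : A i =>
            expUtil u i (Function.update σ' i (pureStrat b)) - expUtil u i σ')
            (Finset.mem_univ i)
  rw [abs_le] at t1 t2
  linarith [t1.1, t1.2, t2.1, t2.2]

lemma abs_nashApr_sub (σ σ' : ∀ j, A j → ℝ) (hσ : IsMixedProfile σ) (hσ' : IsMixedProfile σ')
    (u : N → (∀ j, A j) → ℝ) (hu : ∀ i a, u i a ∈ Set.Icc (0:ℝ) 1) :
    |nashApr σ u - nashApr σ' u| ≤ 2 * dist1 σ σ' := by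
  rw [abs_sub_le_iff]
  constructor
  · linarith [nashApr_le_add σ σ' hσ hσ' u hu]
  · have := nashApr_le_add σ' σ hσ' hσ u hu
    rw [dist1_comm σ' σ] at this
    linarith

lemma expUtil_decomp (u : N → (∀ j, A j) → ℝ) (i : N) (σ : ∀ j, A j → ℝ) :
    ∑ b, σ i b * expUtil u i (Function.update σ i (pureStrat b)) = expUtil u i σ := by
  have key : ∀ b : A i, ∀ a : ∀ j, A j,
      (∏ j, Function.update σ i (pureStrat b) j (a j)) =
      pureStrat b (a i) * ∏ j ∈ ({i} : Finset N)ᶜ, σ j (a j) := by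
    intro b a
    rw [Fintype.prod_eq_mul_prod_compl i]
    congr 1
    · rw [Function.update_self]
    · exact Finset.prod_congr rfl fun j hj =>
        congrFun (Function.update_of_ne (by simpa using hj) _ _) _
  unfold expUtil
  calc ∑ b, σ i b * ∑ a : ∀ j, A j, (∏ j, Function.update σ i (pureStrat b) j (a j)) * u i a
      = ∑ b, ∑ a : ∀ j, A j, σ i b * (pureStrat b (a i) *
          ((∏ j ∈ ({i} : Finset N)ᶜ, σ j (a j)) * u i a)) := by
        apply Finset.sum_congr rfl; intro b _
        rw [Finset.mul_sum]
        apply Finset.sum_congr rfl; intro a _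
        rw [key b a]; ring
    _ = ∑ a : ∀ j, A j, (∑ b, σ i b * pureStrat b (a i)) *
          ((∏ j ∈ ({i} : Finset N)ᶜ, σ j (a j)) * u i a) := by
        rw [Finset.sum_comm]
        apply Finset.sum_congr rfl; intro a _
        rw [Finset.sum_mul]
        apply Finset.sum_congr rfl; intro b _
        ring
    _ = ∑ a : ∀ j, A j, (∏ j, σ j (a j)) * u i a := by
        apply Finset.sum_congr rfl; intro a _
        have h1 : ∑ b, σ i b * pureStrat b (a i) = σ i (a i) := by
          unfold pureStrat
          simp [mul_ite]
        rw [h1, Fintype.prod_eq_mul_prod_compl i (fun j => σ j (a j)), mul_assoc]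

lemma nashApr_nonneg (σ : ∀ j, A j → ℝ) (hσ : IsMixedProfile σ)
    (u : N → (∀ j, A j) → ℝ) : 0 ≤ nashApr σ u := by
  unfold nashApr
  have i : N := Classical.arbitrary N
  set X : A i → ℝ := fun b => expUtil u i (Function.update σ i (pureStrat b)) with hX
  have hE : expUtil u i σ = ∑ b, σ i b * X b := (expUtil_decomp u i σ).symm
  have hle : expUtil u i σ ≤ Finset.univ.sup' Finset.univ_nonempty X := by
    rw [hE]
    calc ∑ b, σ i b * X b ≤ ∑ b, σ i b * (Finset.univ.sup' Finset.univ_nonempty X) := by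
          apply Finset.sum_le_sum
          intro b _
          exact mul_le_mul_of_nonneg_left (Finset.le_sup' X (Finset.mem_univ b)) (hσ.1 i b)
      _ = Finset.univ.sup' Finset.univ_nonempty X := by
          rw [← Finset.sum_mul, hσ.2 i, one_mul]
  obtain ⟨b0, _, hb0⟩ := Finset.exists_mem_eq_sup' Finset.univ_nonempty X
  have h0 : 0 ≤ X b0 - expUtil u i σ := by rw [← hb0]; linarith
  refine le_trans h0 ?_
  calc X b0 - expUtil u i σ
      ≤ Finset.univ.sup' Finset.univ_nonempty (fun b : A i =>
          expUtil u i (Function.update σ i (pureStrat b)) - expUtil u i σ) :=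
        Finset.le_sup' (fun b : A i =>
          expUtil u i (Function.update σ i (pureStrat b)) - expUtil u i σ) (Finset.mem_univ b0)
    _ ≤ _ := Finset.le_sup' (fun i : N => Finset.univ.sup' Finset.univ_nonempty fun b : A i =>
          expUtil u i (Function.update σ i (pureStrat b)) - expUtil u i σ) (Finset.mem_univ i)

lemma nashApr_le_one (σ : ∀ j, A j → ℝ) (hσ : IsMixedProfile σ)
    (u : N → (∀ j, A j) → ℝ) (hu : ∀ i a, u i a ∈ Set.Icc (0:ℝ) 1) : nashApr σ u ≤ 1 := by
  unfold nashApr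
  apply Finset.sup'_le
  intro i _
  apply Finset.sup'_le
  intro b _
  have h1 := expUtil_le_one u hu i _ (update_mixed hσ b)
  have h2 := expUtil_nonneg u hu i σ hσ
  linarith

set_option maxHeartbeats 1000000 in
lemma massart {α : Type*} [DecidableEq α] {m K : ℕ} (hm : 1 ≤ m)
    (C : Finset α) (hC : C.Nonempty) (hK : C.card = K)
    (f : α → Fin m → ℝ) (hf0 : ∀ g j, 0 ≤ f g j) (hf1 : ∀ g j, f g j ≤ 1) :
    (1 / (2:ℝ) ^ m) * ∑ x : Fin m → Bool,
        C.sup' hC (fun g => ∑ j, (if x j then (1:ℝ) else -1) * f g j)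
      ≤ Real.sqrt (2 * m * Real.log K) := by
  classical
  set ε : Bool → ℝ := fun b => if b then 1 else -1 with hε
  set T : α → (Fin m → Bool) → ℝ := fun g x => ∑ j, ε (x j) * f g j with hT
  set E : ℝ := (1 / (2:ℝ) ^ m) * ∑ x : Fin m → Bool, C.sup' hC (fun g => T g x) with hE
  show E ≤ Real.sqrt (2 * m * Real.log K)
  have hKpos : 0 < K := hK ▸ Finset.card_pos.mpr hC
  have hK1 : (1:ℝ) ≤ K := by exact_mod_cast hKpos
  have hL : 0 ≤ Real.log K := Real.log_nonneg hK1
  have hmpos : (0:ℝ) < m := by exact_mod_cast hm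
  have hw : (0:ℝ) < 1 / (2:ℝ) ^ m := by positivity
  have hwsum : ∑ _x : Fin m → Bool, (1 / (2:ℝ) ^ m) = 1 := by
    rw [Finset.sum_const]
    simp [Fintype.card_fun]
  have key : ∀ lam : ℝ, 0 < lam → E ≤ Real.log K / lam + lam * m / 2 := by
    intro lam hlam
    have step1 : Real.exp (lam * E) ≤
        ∑ x : Fin m → Bool, (1 / (2:ℝ) ^ m) * Real.exp (lam * C.sup' hC (fun g => T g x)) := by
      have hmain := convexOn_exp.map_sum_le (t := (Finset.univ : Finset (Fin m → Bool)))
        (w := fun _ => (1 / (2:ℝ) ^ m)) (p := fun x => lam * C.sup' hC (fun g => T g x))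
        (fun _ _ => le_of_lt hw) hwsum (fun _ _ => Set.mem_univ _)
      have heq : lam * E = ∑ x : Fin m → Bool,
          (1 / (2:ℝ) ^ m) • (lam * C.sup' hC (fun g => T g x)) := by
        rw [hE, Finset.mul_sum, Finset.mul_sum]
        apply Finset.sum_congr rfl
        intro x _
        simp [smul_eq_mul]
        ring
      rw [heq]
      refine le_trans hmain ?_
      apply le_of_eq
      apply Finset.sum_congr rfl
      intro x _
      simp [smul_eq_mul]
    have step2 : ∀ x : Fin m → Bool, Real.exp (lam * C.sup' hC (fun g => T g x)) ≤
        ∑ g ∈ C, Real.exp (lam * T g x) := by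
      intro x
      obtain ⟨g0, hg0, hgeq⟩ := Finset.exists_mem_eq_sup' hC (fun g => T g x)
      rw [hgeq]
      exact Finset.single_le_sum (f := fun g => Real.exp (lam * T g x)) (fun g _ => (Real.exp_pos _).le) hg0
    have step3 : ∀ g ∈ C, ∑ x : Fin m → Bool, (1 / (2:ℝ) ^ m) * Real.exp (lam * T g x) ≤
        Real.exp (lam ^ 2 * m / 2) := by
      intro g _
      have hfac : ∀ x : Fin m → Bool, Real.exp (lam * T g x) =
          ∏ j, Real.exp (lam * (ε (x j) * f g j)) := by
        intro x
        rw [← Real.exp_sum, hT]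
        simp [Finset.mul_sum]
      have hsum : ∑ x : Fin m → Bool, ∏ j, Real.exp (lam * (ε (x j) * f g j)) =
          ∏ j : Fin m, (Real.exp (lam * f g j) + Real.exp (-(lam * f g j))) := by
        rw [← Fintype.prod_sum (fun j b => Real.exp (lam * (ε b * f g j)))]
        apply Finset.prod_congr rfl
        intro j _
        rw [Fintype.sum_bool]
        simp [hε]
      calc ∑ x : Fin m → Bool, (1 / (2:ℝ) ^ m) * Real.exp (lam * T g x)
          = (1 / (2:ℝ) ^ m) * ∑ x : Fin m → Bool, ∏ j, Real.exp (lam * (ε (x j) * f g j)) := by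
            rw [← Finset.mul_sum]
            congr 1
            exact Finset.sum_congr rfl fun x _ => hfac x
        _ = ∏ j : Fin m, Real.cosh (lam * f g j) := by
            rw [hsum]
            have : ∀ j : Fin m, Real.exp (lam * f g j) + Real.exp (-(lam * f g j)) =
                2 * Real.cosh (lam * f g j) := by
              intro j
              rw [Real.cosh_eq]
              ring
            rw [Finset.prod_congr rfl fun j _ => this j, Finset.prod_mul_distrib,
              Finset.prod_const]
            simp
        _ ≤ ∏ j : Fin m, Real.exp (lam ^ 2 / 2) := by
            apply Finset.prod_le_prod
            · intro j _
              exact le_of_lt (Real.cosh_pos _)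
            · intro j _
              refine le_trans (Real.cosh_le_exp_half_sq _) (Real.exp_le_exp.mpr ?_)
              have hf2 : f g j ^ 2 ≤ 1 := by nlinarith [hf0 g j, hf1 g j]
              have h1 : (lam * f g j) ^ 2 ≤ lam ^ 2 := by
                calc (lam * f g j) ^ 2 = lam ^ 2 * f g j ^ 2 := by ring
                  _ ≤ lam ^ 2 * 1 := mul_le_mul_of_nonneg_left hf2 (sq_nonneg lam)
                  _ = lam ^ 2 := mul_one _
              linarith
        _ = Real.exp (lam ^ 2 * m / 2) := by
            rw [Finset.prod_const, Finset.card_univ, Fintype.card_fin,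
              ← Real.exp_nat_mul]
            congr 1
            ring
    have combined : Real.exp (lam * E) ≤ K * Real.exp (lam ^ 2 * m / 2) := by
      calc Real.exp (lam * E)
          ≤ ∑ x : Fin m → Bool, (1 / (2:ℝ) ^ m) *
              Real.exp (lam * C.sup' hC (fun g => T g x)) := step1
        _ ≤ ∑ x : Fin m → Bool, (1 / (2:ℝ) ^ m) * ∑ g ∈ C, Real.exp (lam * T g x) := by
            apply Finset.sum_le_sum
            intro x _
            exact mul_le_mul_of_nonneg_left (step2 x) hw.le
        _ = ∑ g ∈ C, ∑ x : Fin m → Bool, (1 / (2:ℝ) ^ m) * Real.exp (lam * T g x) := by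
            have hms : ∀ x : Fin m → Bool, (1 / (2:ℝ) ^ m) * ∑ g ∈ C, Real.exp (lam * T g x)
                = ∑ g ∈ C, (1 / (2:ℝ) ^ m) * Real.exp (lam * T g x) :=
              fun x => Finset.mul_sum _ _ _
            rw [Finset.sum_congr rfl fun x _ => hms x, Finset.sum_comm]
        _ ≤ ∑ _g ∈ C, Real.exp (lam ^ 2 * m / 2) := Finset.sum_le_sum step3
        _ = K * Real.exp (lam ^ 2 * m / 2) := by
            rw [Finset.sum_const, hK, nsmul_eq_mul]
    have hexp : Real.exp (lam * E) ≤ Real.exp (Real.log K + lam ^ 2 * m / 2) := by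
      rw [Real.exp_add, Real.exp_log (by exact_mod_cast hKpos : (0:ℝ) < K)]
      exact combined
    have hlin : lam * E ≤ Real.log K + lam ^ 2 * m / 2 := Real.exp_le_exp.mp hexp
    have hdiv : E ≤ (Real.log K + lam ^ 2 * m / 2) / lam := by
      rw [le_div_iff₀ hlam]
      calc E * lam = lam * E := mul_comm _ _
        _ ≤ _ := hlin
    refine le_trans hdiv (le_of_eq ?_)
    field_simp
  rcases eq_or_lt_of_le hL with hL0 | hLpos
  · have hE0 : E ≤ 0 := by
      apply le_of_forall_pos_le_add
      intro δ hδ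
      have hlam : (0:ℝ) < 2 * δ / m := by positivity
      have := key (2 * δ / m) hlam
      rw [← hL0] at this
      have heq : (0:ℝ) / (2 * δ / m) + (2 * δ / m) * m / 2 = δ := by
        field_simp
        ring
      linarith [this, heq]
    refine le_trans hE0 ?_
    exact Real.sqrt_nonneg _
  · set lam0 : ℝ := Real.sqrt (2 * Real.log K / m) with hlam0
    have hlam0pos : 0 < lam0 := Real.sqrt_pos.mpr (by positivity)
    have hsq : lam0 ^ 2 = 2 * Real.log K / m := Real.sq_sqrt (by positivity)
    have h2 : Real.sqrt (2 * m * Real.log K) = lam0 * m := by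
      have hsq2 : (lam0 * m) ^ 2 = 2 * m * Real.log K := by
        rw [mul_pow, hsq]
        field_simp
      rw [← hsq2, Real.sqrt_sq (by positivity)]
    have hdiv : Real.log K / lam0 = lam0 * m / 2 := by
      have hlog : Real.log K = lam0 ^ 2 * m / 2 := by
        rw [hsq]
        field_simp
      rw [hlog]
      field_simp
    have := key lam0 hlam0pos
    rw [hdiv] at this
    rw [h2]
    linarith

end Aux

theorem rademacher_complexity_bound
    {N : Type*} [Fintype N] [DecidableEq N] [Nonempty N]
    {A : N → Type*} [∀ i, Fintype (A i)] [∀ i, DecidableEq (A i)] [∀ i, Nonempty (A i)]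
    (H : Set (NEApprox N A)) (hH : H.Nonempty)
    {m : ℕ} (hm : 1 ≤ m) (S : Fin m → GameUtil N A)
    (r : ℝ) (hr : 0 < r)
    (C : Finset (NEApprox N A)) (hC : C.Nonempty) (K : ℕ) (hK : C.card = K)
    (hcover : Covers r C H) :
    radComplexity H S ≤ Real.sqrt (2 * Real.log K / m) + 2 * r := by
  classical
  have hmpos : (0:ℝ) < m := by exact_mod_cast hm
  have hlip : ∀ (h g : NEApprox N A), (∀ u, dist1 (h.1 u) (g.1 u) ≤ r) →
      ∀ j : Fin m, |nashLoss h (S j) - nashLoss g (S j)| ≤ 2 * r := by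
    intro h g hd j
    calc |nashLoss h (S j) - nashLoss g (S j)|
        ≤ 2 * dist1 (h.1 (S j)) (g.1 (S j)) :=
          abs_nashApr_sub (h.1 (S j)) (g.1 (S j)) (h.2 (S j)) (g.2 (S j)) (S j).1 (S j).2
      _ ≤ 2 * r := by linarith [hd (S j)]
  have percover : ∀ x : Fin m → Bool,
      sSup ((fun h : NEApprox N A =>
          ∑ j, (if x j then (1:ℝ) else -1) * nashLoss h (S j)) '' H) ≤
        C.sup' hC (fun g => ∑ j, (if x j then (1:ℝ) else -1) * nashLoss g (S j))
          + 2 * r * m := by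
    intro x
    apply csSup_le (hH.image _)
    rintro y ⟨h, hh, rfl⟩
    obtain ⟨g, hg, hd⟩ := hcover h hh
    have hterm : ∀ j : Fin m, (if x j then (1:ℝ) else -1) * nashLoss h (S j)
        ≤ (if x j then (1:ℝ) else -1) * nashLoss g (S j) + 2 * r := by
      intro j
      have hj := hlip h g hd j
      rw [abs_le] at hj
      by_cases hxj : x j <;> simp [hxj] <;> linarith [hj.1, hj.2]
    have hsum : ∑ j, (if x j then (1:ℝ) else -1) * nashLoss h (S j)
        ≤ (∑ j, (if x j then (1:ℝ) else -1) * nashLoss g (S j)) + 2 * r * m := by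
      calc ∑ j, (if x j then (1:ℝ) else -1) * nashLoss h (S j)
          ≤ ∑ j, ((if x j then (1:ℝ) else -1) * nashLoss g (S j) + 2 * r) :=
            Finset.sum_le_sum fun j _ => hterm j
        _ = (∑ j, (if x j then (1:ℝ) else -1) * nashLoss g (S j)) + 2 * r * m := by
            rw [Finset.sum_add_distrib, Finset.sum_const, Finset.card_univ, Fintype.card_fin,
              nsmul_eq_mul]
            ring
    refine le_trans hsum ?_
    have hle := Finset.le_sup'
      (fun g => ∑ j, (if x j then (1:ℝ) else -1) * nashLoss g (S j)) hg
    linarith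
  have hmas := massart hm C hC hK (fun g j => nashLoss g (S j))
    (fun g j => nashApr_nonneg (g.1 (S j)) (g.2 (S j)) (S j).1)
    (fun g j => nashApr_le_one (g.1 (S j)) (g.2 (S j)) (S j).1 (S j).2)
  have hQ : (1 / (2:ℝ) ^ m) * (∑ x : Fin m → Bool,
      sSup ((fun h : NEApprox N A =>
        ∑ j, (if x j then (1:ℝ) else -1) * nashLoss h (S j)) '' H)) ≤
      Real.sqrt (2 * m * Real.log K) + 2 * r * m := by
    calc (1 / (2:ℝ) ^ m) * (∑ x : Fin m → Bool,
        sSup ((fun h : NEApprox N A =>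
          ∑ j, (if x j then (1:ℝ) else -1) * nashLoss h (S j)) '' H))
        ≤ (1 / (2:ℝ) ^ m) * (∑ x : Fin m → Bool,
            (C.sup' hC (fun g => ∑ j, (if x j then (1:ℝ) else -1) * nashLoss g (S j))
              + 2 * r * m)) := by
          apply mul_le_mul_of_nonneg_left _ (by positivity)
          exact Finset.sum_le_sum fun x _ => percover x
      _ = (1 / (2:ℝ) ^ m) * (∑ x : Fin m → Bool,
            C.sup' hC (fun g => ∑ j, (if x j then (1:ℝ) else -1) * nashLoss g (S j)))
            + 2 * r * m := by
          rw [Finset.sum_add_distrib, Finset.sum_const, Finset.card_univ, mul_add,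
            nsmul_eq_mul]
          congr 1
          simp [Fintype.card_fun]
      _ ≤ Real.sqrt (2 * m * Real.log K) + 2 * r * m := by
          exact add_le_add_left hmas _
  have hsqrt : Real.sqrt (2 * m * Real.log K) / m = Real.sqrt (2 * Real.log K / m) := by
    have hKpos : 0 < K := hK ▸ Finset.card_pos.mpr hC
    have hL : 0 ≤ Real.log K := Real.log_nonneg (by exact_mod_cast hKpos)
    rw [show (2:ℝ) * Real.log K / m = (2 * m * Real.log K) / m ^ 2 by
      field_simp]
    rw [Real.sqrt_div (by positivity), Real.sqrt_sq hmpos.le]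
  rw [radComplexity]
  calc (1 / (m:ℝ)) * ((1 / (2:ℝ) ^ m) * ∑ x : Fin m → Bool,
        sSup ((fun h : NEApprox N A =>
          ∑ j, (if x j then (1:ℝ) else -1) * nashLoss h (S j)) '' H))
      ≤ (1 / (m:ℝ)) * (Real.sqrt (2 * m * Real.log K) + 2 * r * m) := by
        apply mul_le_mul_of_nonneg_left hQ (by positivity)
    _ = Real.sqrt (2 * m * Real.log K) / m + 2 * r := by
        field_simp
    _ = Real.sqrt (2 * Real.log K / m) + 2 * r := by rw [hsqrt]
end
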